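/- Let N > 0, 0 ≤ ε < 1/12, B₀ ≤ N/(18(1−ε)), and b, g ≥ 0 with b + g ≤ N/11. Then (B₀ + b)/(N + b − (N/11 − b)) < 1/6, i.e., the fraction of bad IDs never reaches 1/6 during an iteration. -/
import Mathlib

theorem bad_fraction_lt_sixth (N ε B₀ b g : ℝ)
    (hN : 0 < N) (hε0 : 0 ≤ ε) (hε : ε < 1 / 12)
    (hB : B₀ ≤ N / (18 * (1 - ε)))
    (hb : 0 ≤ b) (hg : 0 ≤ g) (hbg : b + g ≤ N / 11) :
    (B₀ + b) / (N + b - (N / 11 - b)) < 1 / 6 := by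
  have h1 : (0:ℝ) < 1 - ε := by linarith
  have hB' : B₀ * (18 * (1 - ε)) ≤ N := by
    rw [le_div_iff₀ (by positivity)] at hB; linarith
  have hden : 0 < N + b - (N / 11 - b) := by linarith
  rw [div_lt_div_iff₀ hden (by norm_num)]
  nlinarith [mul_pos hN h1]
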